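/- Let M be an (ε, δ(ε))-differentially private mechanism and let Uniform denote sampling m elements without replacement from a dataset of n points. Then the subsampled mechanism M' = M ∘ Uniform satisfies (ε', δ'(ε'))-differential privacy with ε' = log(1 + (m/n)(e^ε − 1)) and δ'(ε') ≤ (m/n) · δ(ε). -/

import Mathlib

open MeasureTheory
open scoped ENNReal

/-- Neighboring multisets: one is obtained from the other by replacing a single element. -/
def NeighborMultiset {X : Type*} (A B : Multiset X) : Prop :=
  ∃ (a b : X) (R : Multiset X), A = a ::ₘ R ∧ B = b ::ₘ R

/-- Neighboring datasets of size `n`: they differ in a single coordinate (replacement). -/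
def NeighborFun {X : Type*} {n : ℕ} (d d' : Fin n → X) : Prop :=
  ∃ i : Fin n, ∀ j, j ≠ i → d j = d' j

/-- `(ε, δ)`-differential privacy. -/
def IsDP {D O : Type*} [MeasurableSpace O] (neighbor : D → D → Prop)
    (M : D → Measure O) (ε δ : ℝ) : Prop :=
  ∀ d d', neighbor d d' → ∀ S : Set O, MeasurableSet S →
    M d S ≤ ENNReal.ofReal (Real.exp ε) * M d' S + ENNReal.ofReal δ

/-- The subsampled mechanism `M ∘ Uniform`: choose a uniformly random subset of `m`
of the `n` data points (without replacement) and run `M` on it. -/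
noncomputable def subsampled {X O : Type*} [MeasurableSpace O] (n m : ℕ)
    (M : Multiset X → Measure O) (d : Fin n → X) : Measure O :=
  ((n.choose m : ℝ≥0∞))⁻¹ •
    ∑ s ∈ Finset.powersetCard m (Finset.univ : Finset (Fin n)), M (s.val.map d)

/-- Privacy amplification by subsampling without replacement (Balle et al. 2018):
if `M` is `(ε, δ)`-DP on datasets of size `m` (replace-one neighboring), then the
subsampled mechanism `M' = M ∘ Uniform` is `(ε', (m/n)·δ)`-DP on datasets of size `n`,
where `ε' = log(1 + (m/n)(e^ε − 1))`. -/
theorem subsampling_amplification {X O : Type*} [MeasurableSpace O]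
    (n m : ℕ) (hm : m ≤ n) (hn : 0 < n)
    (M : Multiset X → Measure O) [∀ A, IsProbabilityMeasure (M A)]
    (ε δ : ℝ) (hε : 0 ≤ ε) (hδ : 0 ≤ δ)
    (hM : IsDP NeighborMultiset M ε δ) :
    IsDP (NeighborFun (n := n))
      (subsampled n m M)
      (Real.log (1 + (m / n : ℝ) * (Real.exp ε - 1)))
      ((m / n : ℝ) * δ) := by
  classical
  intro d d' hdd' S hS
  obtain ⟨i, hi⟩ := hdd'
  set c := Real.exp ε with hcdef
  have hc1 : (1:ℝ) ≤ c := Real.one_le_exp hε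
  have hc0 : (0:ℝ) < c := lt_of_lt_of_le one_pos hc1
  set P : Finset (Finset (Fin n)) := Finset.powersetCard m (Finset.univ : Finset (Fin n))
    with hPdef
  set P1 : Finset (Finset (Fin n)) := P.filter (fun s => i ∈ s) with hP1def
  set P0 : Finset (Finset (Fin n)) := P.filter (fun s => ¬ i ∈ s) with hP0def
  set F : Finset (Fin n) → ℝ := fun t => ((M (t.val.map d)) S).toReal with hFdef
  set G : Finset (Fin n) → ℝ := fun t => ((M (t.val.map d')) S).toReal with hGdef
  have hfin : ∀ t : Multiset X, M t S ≠ ⊤ := fun t => measure_ne_top _ _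
  have hFnn : ∀ t, 0 ≤ F t := fun t => ENNReal.toReal_nonneg
  have hGnn : ∀ t, 0 ≤ G t := fun t => ENNReal.toReal_nonneg
  have hmemP1 : ∀ s ∈ P1, s.card = m ∧ i ∈ s := by
    intro s hs
    obtain ⟨h1, h2⟩ := Finset.mem_filter.mp hs
    exact ⟨Finset.mem_powersetCard_univ.mp h1, h2⟩
  have hmemP0 : ∀ s ∈ P0, s.card = m ∧ i ∉ s := by
    intro s hs
    obtain ⟨h1, h2⟩ := Finset.mem_filter.mp hs
    exact ⟨Finset.mem_powersetCard_univ.mp h1, h2⟩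
  -- key pairwise inequality: for s containing i and j ∉ s.erase i,
  -- replacing d i by d' j gives a neighboring dataset
  have key : ∀ s ∈ P1, ∀ j : Fin n, j ∉ s.erase i →
      F s ≤ c * G (insert j (s.erase i)) + δ := by
    intro s hs j hj
    have his : i ∈ s := (hmemP1 s hs).2
    have hierase : i ∉ s.erase i := Finset.notMem_erase i s
    have h1 : s.val.map d = d i ::ₘ (s.erase i).val.map d := by
      conv_lhs => rw [← Finset.insert_erase his]
      rw [Finset.insert_val_of_notMem hierase, Multiset.map_cons]
    have h2 : (insert j (s.erase i)).val.map d' = d' j ::ₘ (s.erase i).val.map d := by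
      rw [Finset.insert_val_of_notMem hj, Multiset.map_cons]
      congr 1
      refine Multiset.map_congr rfl ?_
      intro x hx
      have hxs : x ∈ s.erase i := hx
      have hxi : x ≠ i := Finset.ne_of_mem_erase hxs
      exact (hi x hxi).symm
    have hnb : NeighborMultiset (s.val.map d) ((insert j (s.erase i)).val.map d') :=
      ⟨d i, d' j, (s.erase i).val.map d, h1, h2⟩
    have hdp := hM _ _ hnb S hS
    have hmulfin : ENNReal.ofReal c * M ((insert j (s.erase i)).val.map d') S ≠ ⊤ :=
      ENNReal.mul_ne_top ENNReal.ofReal_ne_top (hfin _)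
    have hRfin : ENNReal.ofReal c * M ((insert j (s.erase i)).val.map d') S
        + ENNReal.ofReal δ ≠ ⊤ :=
      ENNReal.add_ne_top.mpr ⟨hmulfin, ENNReal.ofReal_ne_top⟩
    have h3 := (ENNReal.toReal_le_toReal (hfin _) hRfin).mpr hdp
    rwa [ENNReal.toReal_add hmulfin ENNReal.ofReal_ne_top, ENNReal.toReal_mul,
      ENNReal.toReal_ofReal hc0.le, ENNReal.toReal_ofReal hδ] at h3
  -- reindexing: summing over (s ∋ i, j ∉ s) matches summing over (t ∌ i, j ∈ t)
  have reindex : ∀ (v : Finset (Fin n) → ℝ),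
      ∑ s ∈ P1, ∑ j ∈ sᶜ, v (insert j (s.erase i)) = ∑ t ∈ P0, ∑ j ∈ t, v t := by
    intro v
    rw [Finset.sum_sigma' P1 (fun s => sᶜ) (fun s j => v (insert j (s.erase i))),
        Finset.sum_sigma' P0 (fun t => t) (fun t _ => v t)]
    refine Finset.sum_nbij' (fun p => ⟨insert p.2 (p.1.erase i), p.2⟩)
      (fun p => ⟨insert i (p.1.erase p.2), p.2⟩) ?_ ?_ ?_ ?_ ?_
    · rintro ⟨s, j⟩ hp
      rw [Finset.mem_sigma] at hp
      obtain ⟨hs, hj⟩ := hp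
      obtain ⟨hcard, his⟩ := hmemP1 s hs
      have hjs : j ∉ s := Finset.mem_compl.mp hj
      have hje : j ∉ s.erase i := fun h => hjs (Finset.mem_of_mem_erase h)
      have hm1 : 1 ≤ m := by
        have : 0 < s.card := Finset.card_pos.mpr ⟨i, his⟩
        omega
      rw [Finset.mem_sigma]
      constructor
      · rw [hP0def, Finset.mem_filter, Finset.mem_powersetCard_univ]
        constructor
        · rw [Finset.card_insert_of_notMem hje, Finset.card_erase_of_mem his, hcard]
          omega
        · intro hmem
          rcases Finset.mem_insert.mp hmem with h | h
          · exact hjs ((show i = j from h) ▸ his)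
          · exact Finset.notMem_erase i s h
      · exact Finset.mem_insert_self _ _
    · rintro ⟨t, j⟩ hp
      rw [Finset.mem_sigma] at hp
      obtain ⟨ht, hj⟩ := hp
      obtain ⟨hcard, hit⟩ := hmemP0 t ht
      have hje : i ∉ t.erase j := fun h => hit (Finset.mem_of_mem_erase h)
      have hm1 : 1 ≤ m := by
        have : 0 < t.card := Finset.card_pos.mpr ⟨j, hj⟩
        omega
      rw [Finset.mem_sigma]
      constructor
      · rw [hP1def, Finset.mem_filter, Finset.mem_powersetCard_univ]
        constructor
        · rw [Finset.card_insert_of_notMem hje, Finset.card_erase_of_mem hj, hcard]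
          omega
        · exact Finset.mem_insert_self _ _
      · rw [Finset.mem_compl]
        intro hmem
        rcases Finset.mem_insert.mp hmem with h | h
        · exact hit ((show j = i from h) ▸ hj)
        · exact Finset.notMem_erase j t h
    · rintro ⟨s, j⟩ hp
      rw [Finset.mem_sigma] at hp
      obtain ⟨hs, hj⟩ := hp
      obtain ⟨hcard, his⟩ := hmemP1 s hs
      have hjs : j ∉ s := Finset.mem_compl.mp hj
      have hje : j ∉ s.erase i := fun h => hjs (Finset.mem_of_mem_erase h)
      have hji : j ≠ i := fun h => hjs (h ▸ his)
      have h1 : (insert j (s.erase i)).erase j = s.erase i := Finset.erase_insert hje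
      simp only [h1, Finset.insert_erase his]
    · rintro ⟨t, j⟩ hp
      rw [Finset.mem_sigma] at hp
      obtain ⟨ht, hj⟩ := hp
      obtain ⟨hcard, hit⟩ := hmemP0 t ht
      have hje : i ∉ t.erase j := fun h => hit (Finset.mem_of_mem_erase h)
      have h1 : (insert i (t.erase j)).erase i = t.erase j := Finset.erase_insert hje
      simp only [h1, Finset.insert_erase hj]
    · rintro ⟨s, j⟩ _
      rfl
  -- the count identity
  have hcount : (P1.card : ℝ) * ((n : ℝ) - m) = (P0.card : ℝ) * m := by
    have h := reindex (fun _ => (1:ℝ))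
    have hL : ∑ s ∈ P1, ∑ _j ∈ sᶜ, (1:ℝ) = (P1.card : ℝ) * ((n : ℝ) - m) := by
      rw [Finset.sum_congr rfl (fun s hs => ?_), Finset.sum_const, nsmul_eq_mul]
      rw [Finset.sum_const, Finset.card_compl, Fintype.card_fin, (hmemP1 s hs).1,
        nsmul_eq_mul, mul_one, Nat.cast_sub hm]
    have hR : ∑ t ∈ P0, ∑ _j ∈ t, (1:ℝ) = (P0.card : ℝ) * m := by
      rw [Finset.sum_congr rfl (fun t ht => ?_), Finset.sum_const, nsmul_eq_mul]
      rw [Finset.sum_const, (hmemP0 t ht).1, nsmul_eq_mul, mul_one]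
    rw [hL, hR] at h
    exact h
  -- inequality (I)
  have hI : (∑ s ∈ P1, F s) ≤ c * (∑ s ∈ P1, G s) + (P1.card : ℝ) * δ := by
    have h1 : (∑ s ∈ P1, F s) ≤ ∑ s ∈ P1, (c * G s + δ) := by
      refine Finset.sum_le_sum ?_
      intro s hs
      have his : i ∈ s := (hmemP1 s hs).2
      have h := key s hs i (Finset.notMem_erase i s)
      rwa [Finset.insert_erase his] at h
    calc (∑ s ∈ P1, F s) ≤ ∑ s ∈ P1, (c * G s + δ) := h1
      _ = c * (∑ s ∈ P1, G s) + (P1.card : ℝ) * δ := by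
          rw [Finset.sum_add_distrib, ← Finset.mul_sum, Finset.sum_const, nsmul_eq_mul]
  -- inequality (II)
  have hII : ((n : ℝ) - m) * (∑ s ∈ P1, F s)
      ≤ c * ((m : ℝ) * ∑ t ∈ P0, G t) + (P1.card : ℝ) * (((n : ℝ) - m) * δ) := by
    have step1 : ((n : ℝ) - m) * (∑ s ∈ P1, F s) = ∑ s ∈ P1, ∑ _j ∈ sᶜ, F s := by
      rw [Finset.mul_sum]
      refine Finset.sum_congr rfl ?_
      intro s hs
      rw [Finset.sum_const, Finset.card_compl, Fintype.card_fin, (hmemP1 s hs).1,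
        nsmul_eq_mul, Nat.cast_sub hm]
    have step2 : ∑ s ∈ P1, ∑ j ∈ sᶜ, F s
        ≤ ∑ s ∈ P1, ∑ j ∈ sᶜ, (c * G (insert j (s.erase i)) + δ) := by
      refine Finset.sum_le_sum ?_
      intro s hs
      refine Finset.sum_le_sum ?_
      intro j hj
      have hjs : j ∉ s := Finset.mem_compl.mp hj
      exact key s hs j (fun h => hjs (Finset.mem_of_mem_erase h))
    have step3 : ∑ s ∈ P1, ∑ j ∈ sᶜ, (c * G (insert j (s.erase i)) + δ)
        = c * ((m : ℝ) * ∑ t ∈ P0, G t) + (P1.card : ℝ) * (((n : ℝ) - m) * δ) := by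
      have e1 : ∑ s ∈ P1, ∑ j ∈ sᶜ, (c * G (insert j (s.erase i)) + δ)
          = c * (∑ s ∈ P1, ∑ j ∈ sᶜ, G (insert j (s.erase i)))
            + ∑ s ∈ P1, ∑ _j ∈ sᶜ, δ := by
        rw [Finset.mul_sum]
        rw [← Finset.sum_add_distrib]
        refine Finset.sum_congr rfl ?_
        intro s _
        rw [Finset.sum_add_distrib, Finset.mul_sum]
      have e2 : ∑ s ∈ P1, ∑ j ∈ sᶜ, G (insert j (s.erase i)) = (m : ℝ) * ∑ t ∈ P0, G t := by
        rw [reindex G, Finset.mul_sum]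
        refine Finset.sum_congr rfl ?_
        intro t ht
        rw [Finset.sum_const, (hmemP0 t ht).1, nsmul_eq_mul]
      have e3 : ∑ s ∈ P1, ∑ _j ∈ sᶜ, δ = (P1.card : ℝ) * (((n : ℝ) - m) * δ) := by
        rw [Finset.sum_congr rfl (fun s hs => ?_), Finset.sum_const, nsmul_eq_mul]
        rw [Finset.sum_const, Finset.card_compl, Fintype.card_fin, (hmemP1 s hs).1,
          nsmul_eq_mul, Nat.cast_sub hm]
      rw [e1, e2, e3]
    calc ((n : ℝ) - m) * (∑ s ∈ P1, F s) = ∑ s ∈ P1, ∑ _j ∈ sᶜ, F s := step1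
      _ ≤ ∑ s ∈ P1, ∑ j ∈ sᶜ, (c * G (insert j (s.erase i)) + δ) := step2
      _ = _ := step3
  -- F = G on P0
  have hFG : ∀ t ∈ P0, F t = G t := by
    intro t ht
    have hit : i ∉ t := (hmemP0 t ht).2
    have : t.val.map d = t.val.map d' := by
      refine Multiset.map_congr rfl ?_
      intro x hx
      have hxt : x ∈ t := hx
      exact hi x (fun h => hit (h ▸ hxt))
    simp only [hFdef, hGdef, this]
  -- cardinality of P
  have hPcard : P.card = n.choose m := by
    rw [hPdef, Finset.card_powersetCard, Finset.card_univ, Fintype.card_fin]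
  have hsplitcard : P1.card + P0.card = n.choose m := by
    rw [← hPcard, hP1def, hP0def]
    exact Finset.card_filter_add_card_filter_not _
  have hC0 : 0 < n.choose m := Nat.choose_pos hm
  -- now reduce the goal
  have hq0 : (0:ℝ) ≤ (m : ℝ) / n := by positivity
  have hx : (0:ℝ) < 1 + (m / n : ℝ) * (c - 1) := by nlinarith
  show (subsampled n m M d) S
      ≤ ENNReal.ofReal (Real.exp (Real.log (1 + (m / n : ℝ) * (c - 1)))) *
        (subsampled n m M d') S + ENNReal.ofReal ((m / n : ℝ) * δ)
  rw [Real.exp_log hx]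
  simp only [subsampled, Measure.smul_apply, Measure.finset_sum_apply, smul_eq_mul]
  have hCne : ((n.choose m : ℝ≥0∞)) ≠ 0 := by
    exact_mod_cast Nat.cast_ne_zero.mpr hC0.ne'
  have hCinvne : ((n.choose m : ℝ≥0∞))⁻¹ ≠ ⊤ := ENNReal.inv_ne_top.mpr hCne
  have hsumdne : (∑ s ∈ P, M (s.val.map d) S) ≠ ⊤ := by
    refine (ENNReal.sum_lt_top.mpr ?_).ne
    intro s _
    exact (hfin _).lt_top
  have hsumd'ne : (∑ s ∈ P, M (s.val.map d') S) ≠ ⊤ := by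
    refine (ENNReal.sum_lt_top.mpr ?_).ne
    intro s _
    exact (hfin _).lt_top
  have hLne : ((n.choose m : ℝ≥0∞))⁻¹ * (∑ s ∈ P, M (s.val.map d) S) ≠ ⊤ :=
    ENNReal.mul_ne_top hCinvne hsumdne
  have hRne : ENNReal.ofReal (1 + (m / n : ℝ) * (c - 1)) *
      (((n.choose m : ℝ≥0∞))⁻¹ * (∑ s ∈ P, M (s.val.map d') S))
      + ENNReal.ofReal ((m / n : ℝ) * δ) ≠ ⊤ :=
    ENNReal.add_ne_top.mpr ⟨ENNReal.mul_ne_top ENNReal.ofReal_ne_top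
      (ENNReal.mul_ne_top hCinvne hsumd'ne), ENNReal.ofReal_ne_top⟩
  refine (ENNReal.toReal_le_toReal hLne hRne).mp ?_
  rw [ENNReal.toReal_add (ENNReal.mul_ne_top ENNReal.ofReal_ne_top
      (ENNReal.mul_ne_top hCinvne hsumd'ne)) ENNReal.ofReal_ne_top,
    ENNReal.toReal_mul, ENNReal.toReal_mul, ENNReal.toReal_mul,
    ENNReal.toReal_inv, ENNReal.toReal_natCast,
    ENNReal.toReal_ofReal hx.le, ENNReal.toReal_ofReal (by positivity : (0:ℝ) ≤ (m / n : ℝ) * δ),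
    ENNReal.toReal_sum (fun s _ => hfin _), ENNReal.toReal_sum (fun s _ => hfin _)]
  -- now a real inequality
  have hsplitF : ∑ s ∈ P, ((M (s.val.map d)) S).toReal = (∑ s ∈ P1, F s) + (∑ t ∈ P0, F t) :=
    (Finset.sum_filter_add_sum_filter_not P (fun s => i ∈ s) F).symm
  have hsplitG : ∑ s ∈ P, ((M (s.val.map d')) S).toReal = (∑ s ∈ P1, G s) + (∑ t ∈ P0, G t) :=
    (Finset.sum_filter_add_sum_filter_not P (fun s => i ∈ s) G).symm
  rw [hsplitF, hsplitG, Finset.sum_congr rfl hFG]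
  set A : ℝ := ∑ t ∈ P0, G t with hAdef
  set B : ℝ := ∑ s ∈ P1, F s with hBdef
  set B' : ℝ := ∑ s ∈ P1, G s with hB'def
  set k1 : ℝ := (P1.card : ℝ) with hk1def
  set k0 : ℝ := (P0.card : ℝ) with hk0def
  set C : ℝ := ((n.choose m : ℕ) : ℝ) with hCdef
  have hAnn : 0 ≤ A := Finset.sum_nonneg fun t _ => hGnn t
  have hBnn : 0 ≤ B := Finset.sum_nonneg fun s _ => hFnn s
  have hB'nn : 0 ≤ B' := Finset.sum_nonneg fun s _ => hGnn s
  have hk1nn : 0 ≤ k1 := Nat.cast_nonneg _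
  have hCpos : (0:ℝ) < C := by rw [hCdef]; exact_mod_cast hC0
  have hnpos : (0:ℝ) < n := by exact_mod_cast hn
  have hmnn : (0:ℝ) ≤ (m:ℝ) := Nat.cast_nonneg _
  have hmn : (m:ℝ) ≤ (n:ℝ) := by exact_mod_cast hm
  have hsumk : k0 + k1 = C := by
    have h := hsplitcard
    rw [hk0def, hk1def, hCdef]
    exact_mod_cast by omega
  have hk1n : k1 * (n:ℝ) = (m:ℝ) * C := by
    linear_combination hcount + (m:ℝ) * hsumk
  have h1 := mul_le_mul_of_nonneg_left hII (sub_nonneg.mpr hc1)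
  have h2 := mul_le_mul_of_nonneg_left hI (by nlinarith : (0:ℝ) ≤ (n:ℝ) - m + m * c)
  have hδk : c * δ * (k1 * (n:ℝ)) = c * δ * ((m:ℝ) * C) := by rw [hk1n]
  have key2c : c * ((n:ℝ) * (B + A))
      ≤ c * ((((n:ℝ)) + m * (c - 1)) * (B' + A) + m * C * δ) := by
    linarith [h1, h2, hδk]
  have key2 : (n:ℝ) * (B + A) ≤ (((n:ℝ)) + m * (c - 1)) * (B' + A) + m * C * δ :=
    (mul_le_mul_iff_right₀ hc0).mp key2c
  have e1 : C⁻¹ * (B + A) = ((n:ℝ) * (B + A)) / ((n:ℝ) * C) := by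
    field_simp
  have e2 : (1 + (m / n : ℝ) * (c - 1)) * (C⁻¹ * (B' + A)) + (m / n : ℝ) * δ
      = ((((n:ℝ)) + m * (c - 1)) * (B' + A) + m * C * δ) / ((n:ℝ) * C) := by
    field_simp
  rw [e1, e2]
  exact (div_le_div_iff_of_pos_right (by positivity : (0:ℝ) < (n:ℝ) * C)).mpr key2
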